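/- arXiv:2307.07019 — 3 statements merged into one kernel-verified Lean document; each statement's English description precedes it below -/
import Mathlib

section
/- Let A be a unital C*-algebra and Z a central C*-subalgebra containing the unit. Then for every pure state μ of A, every z ∈ Z and every a ∈ A, one has μ(z a) = μ(z) μ(a); in particular the restriction of μ to Z is a multiplicative linear functional. -/
open scoped ComplexOrder

section Aux

variable {A : Type*} [CStarAlgebra A]

/-- For a selfadjoint `x` and a function `f` that is nonnegative on the spectrum,
`cfc f x` is of the form `star e * e`. -/
private lemma aux_sqrt_cfc (x : A) (hx : IsSelfAdjoint x) (f : ℝ → ℝ) (hf : Continuous f)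
    (hf0 : ∀ s ∈ spectrum ℝ x, 0 ≤ f s) :
    star (cfc (fun s => Real.sqrt (f s)) x) * cfc (fun s => Real.sqrt (f s)) x = cfc f x := by
  have hcont : ContinuousOn (fun s => Real.sqrt (f s)) (spectrum ℝ x) :=
    Continuous.continuousOn (by fun_prop)
  have hsa : IsSelfAdjoint (cfc (fun s => Real.sqrt (f s)) x) := cfc_predicate _ x
  rw [hsa.star_eq,
    ← cfc_mul (fun s => Real.sqrt (f s)) (fun s => Real.sqrt (f s)) x hcont hcont]
  exact cfc_congr fun s hs => Real.mul_self_sqrt (hf0 s hs)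

/-- A positive functional is nonnegative on `cfc` of nonnegative functions. -/
private lemma aux_mu_cfc_nonneg (μ : A →ₗ[ℂ] ℂ)
    (hpos : ∀ a : A, 0 ≤ μ (star a * a)) (x : A) (hx : IsSelfAdjoint x)
    (f : ℝ → ℝ) (hf : Continuous f) (hf0 : ∀ s ∈ spectrum ℝ x, 0 ≤ f s) :
    0 ≤ μ (cfc f x) := by
  rw [← aux_sqrt_cfc x hx f hf hf0]
  exact hpos _

/-- A state takes real values, bounded by the norm, on selfadjoint elements. -/
private lemma aux_mu_real (μ : A →ₗ[ℂ] ℂ)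
    (hpos : ∀ a : A, 0 ≤ μ (star a * a)) (hone : μ 1 = 1)
    (x : A) (hx : IsSelfAdjoint x) :
    μ x = ((μ x).re : ℂ) ∧ |(μ x).re| ≤ ‖x‖ := by
  rcases subsingleton_or_nontrivial A with hA | hA
  · exfalso
    have h1 : (1 : A) = 0 := Subsingleton.elim _ _
    rw [h1, map_zero] at hone
    exact zero_ne_one hone
  have hspec : ∀ s ∈ spectrum ℝ x, |s| ≤ ‖x‖ := fun s hs => by
    simpa [Real.norm_eq_abs] using spectrum.norm_le_norm_of_mem hs
  have hmap : ∀ c : ℝ, μ (algebraMap ℝ A c) = (c : ℂ) := by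
    intro c
    rw [Algebra.algebraMap_eq_smul_one, LinearMap.map_smul_of_tower, hone]
    simp [Complex.real_smul]
  have h1 : 0 ≤ (‖x‖ : ℂ) + μ x := by
    have := aux_mu_cfc_nonneg μ hpos x hx (fun s => ‖x‖ + s)
      (by fun_prop) (fun s hs => by
        have h := (abs_le.mp (hspec s hs)).1
        show (0 : ℝ) ≤ ‖x‖ + s
        linarith)
    rwa [cfc_add x (fun _ => ‖x‖) (fun s => s) (by fun_prop) (by fun_prop),
      cfc_const _ x, cfc_id' ℝ x, map_add, hmap] at this
  have h2 : 0 ≤ (‖x‖ : ℂ) - μ x := by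
    have := aux_mu_cfc_nonneg μ hpos x hx (fun s => ‖x‖ - s)
      (by fun_prop) (fun s hs => by
        have h := (abs_le.mp (hspec s hs)).2
        show (0 : ℝ) ≤ ‖x‖ - s
        linarith)
    rwa [cfc_sub (fun _ => ‖x‖) (fun s => s) x (by fun_prop) (by fun_prop),
      cfc_const _ x, cfc_id' ℝ x, map_sub, hmap] at this
  obtain ⟨h1re, h1im⟩ := Complex.le_def.mp h1
  obtain ⟨h2re, h2im⟩ := Complex.le_def.mp h2
  simp only [Complex.add_re, Complex.add_im, Complex.sub_re, Complex.sub_im,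
    Complex.ofReal_re, Complex.ofReal_im, Complex.zero_re, Complex.zero_im] at h1re h1im h2re h2im
  constructor
  · exact Complex.ext rfl (by simpa using h1im.symm)
  · rw [abs_le]; constructor <;> linarith

/-- The key lemma: if `w = star p * p`, `1 - w = star q * q`, `w` is central and
`μ w = t ∈ (0,1)`, then purity of `μ` forces `μ (w * a) = μ w * μ a`. -/
private lemma aux_key (μ : A →ₗ[ℂ] ℂ)
    (hpos : ∀ a : A, 0 ≤ μ (star a * a))
    (hone : μ 1 = 1)
    (hpure : ∀ (μ₁ μ₂ : A →ₗ[ℂ] ℂ),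
      (∀ a : A, 0 ≤ μ₁ (star a * a)) → μ₁ 1 = 1 →
      (∀ a : A, 0 ≤ μ₂ (star a * a)) → μ₂ 1 = 1 →
      ∀ t : ℝ, 0 < t → t < 1 →
        μ = (t : ℂ) • μ₁ + ((1 - t : ℝ) : ℂ) • μ₂ → μ₁ = μ ∧ μ₂ = μ)
    (w p q : A) (hp : star p * p = w) (hq : star q * q = 1 - w)
    (hwc : ∀ b : A, w * b = b * w)
    {t : ℝ} (ht : μ w = (t : ℂ)) (ht0 : 0 < t) (ht1 : t < 1) (a : A) :
    μ (w * a) = μ w * μ a := by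
  have htne : (t : ℂ) ≠ 0 := by exact_mod_cast ht0.ne'
  have ht1ne : ((1 - t : ℝ) : ℂ) ≠ 0 := by
    exact_mod_cast (sub_pos.mpr ht1).ne'
  have hwc' : ∀ b : A, (1 - w) * b = b * (1 - w) := fun b => by
    rw [sub_mul, mul_sub, one_mul, mul_one, hwc]
  -- rewriting products
  have hrw : ∀ (v e : A), (∀ b : A, v * b = b * v) → (star e * e = v) →
      ∀ b : A, star (e * b) * (e * b) = v * (star b * b) := by
    intro v e hv he b
    calc star (e * b) * (e * b) = star b * (star e * e) * b := by
          rw [star_mul]; simp only [mul_assoc]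
      _ = star b * v * b := by rw [he]
      _ = v * (star b * b) := by rw [← hv (star b), mul_assoc]
  set μ₁ : A →ₗ[ℂ] ℂ := ((t : ℂ))⁻¹ • (μ ∘ₗ LinearMap.mulLeft ℂ w) with hμ₁
  set μ₂ : A →ₗ[ℂ] ℂ := (((1 - t : ℝ) : ℂ))⁻¹ • (μ ∘ₗ LinearMap.mulLeft ℂ (1 - w)) with hμ₂
  have hμ₁app : ∀ b : A, μ₁ b = ((t : ℂ))⁻¹ * μ (w * b) := fun b => rfl
  have hμ₂app : ∀ b : A, μ₂ b = (((1 - t : ℝ) : ℂ))⁻¹ * μ ((1 - w) * b) := fun b => rfl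
  have hinv_nonneg : ∀ (s : ℝ), 0 < s → ∀ z : ℂ, 0 ≤ z → 0 ≤ ((s : ℂ))⁻¹ * z := by
    intro s hs z hz
    apply mul_nonneg _ hz
    rw [← Complex.ofReal_inv]
    exact_mod_cast (inv_nonneg.mpr hs.le)
  have hpos₁ : ∀ b : A, 0 ≤ μ₁ (star b * b) := by
    intro b
    rw [hμ₁app]
    refine hinv_nonneg t ht0 _ ?_
    rw [← hrw w p hwc hp b]
    exact hpos _
  have hpos₂ : ∀ b : A, 0 ≤ μ₂ (star b * b) := by
    intro b
    rw [hμ₂app]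
    refine hinv_nonneg (1 - t) (sub_pos.mpr ht1) _ ?_
    rw [← hrw (1 - w) q hwc' hq b]
    exact hpos _
  have hone₁ : μ₁ 1 = 1 := by
    rw [hμ₁app, mul_one, ht, inv_mul_cancel₀ htne]
  have hone₂ : μ₂ 1 = 1 := by
    have : μ (1 - w) = ((1 - t : ℝ) : ℂ) := by
      rw [map_sub, hone, ht]; push_cast; ring
    rw [hμ₂app, mul_one, this, inv_mul_cancel₀ ht1ne]
  have hdec : μ = (t : ℂ) • μ₁ + ((1 - t : ℝ) : ℂ) • μ₂ := by
    ext b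
    simp only [LinearMap.add_apply, LinearMap.smul_apply, smul_eq_mul, hμ₁app, hμ₂app]
    rw [← mul_assoc, mul_inv_cancel₀ htne, one_mul,
      ← mul_assoc, mul_inv_cancel₀ ht1ne, one_mul, ← map_add]
    congr 1
    rw [sub_mul, one_mul]
    abel
  obtain ⟨h₁, -⟩ := hpure μ₁ μ₂ hpos₁ hone₁ hpos₂ hone₂ t ht0 ht1 hdec
  have hval := LinearMap.congr_fun h₁ a
  rw [hμ₁app] at hval
  rw [ht]
  field_simp at hval ⊢
  linear_combination hval

/-- Multiplicativity for selfadjoint central elements. -/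
private lemma aux_keySA (μ : A →ₗ[ℂ] ℂ)
    (hpos : ∀ a : A, 0 ≤ μ (star a * a))
    (hone : μ 1 = 1)
    (hpure : ∀ (μ₁ μ₂ : A →ₗ[ℂ] ℂ),
      (∀ a : A, 0 ≤ μ₁ (star a * a)) → μ₁ 1 = 1 →
      (∀ a : A, 0 ≤ μ₂ (star a * a)) → μ₂ 1 = 1 →
      ∀ t : ℝ, 0 < t → t < 1 →
        μ = (t : ℂ) • μ₁ + ((1 - t : ℝ) : ℂ) • μ₂ → μ₁ = μ ∧ μ₂ = μ)
    (x : A) (hx : IsSelfAdjoint x) (hxc : ∀ b : A, x * b = b * x) (a : A) :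
    μ (x * a) = μ x * μ a := by
  rcases subsingleton_or_nontrivial A with hA | hA
  · exfalso
    have h1 : (1 : A) = 0 := Subsingleton.elim _ _
    rw [h1, map_zero] at hone
    exact zero_ne_one hone
  have hspec : ∀ s ∈ spectrum ℝ x, |s| ≤ ‖x‖ := fun s hs => by
    simpa [Real.norm_eq_abs] using spectrum.norm_le_norm_of_mem hs
  obtain ⟨r, hr⟩ : ∃ r : ℝ, r = ‖x‖ + 1 := ⟨_, rfl⟩
  have hrpos : 0 < r := by rw [hr]; positivity
  obtain ⟨c, hc⟩ : ∃ c : ℝ, c = (3 * r)⁻¹ := ⟨_, rfl⟩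
  have hcpos : 0 < c := by rw [hc]; positivity
  have hcr : c * (3 * r) = 1 := by
    rw [hc]; field_simp
  obtain ⟨f, hf⟩ : ∃ f : ℝ → ℝ, f = fun s => c * (s + r) := ⟨_, rfl⟩
  have hfc : Continuous f := by rw [hf]; fun_prop
  have hf0 : ∀ s ∈ spectrum ℝ x, 0 ≤ f s := by
    intro s hs
    have h := (abs_le.mp (hspec s hs)).1
    rw [hf]
    have h1 : 0 ≤ s + r := by rw [hr]; linarith
    exact mul_nonneg hcpos.le h1
  have hf1 : ∀ s ∈ spectrum ℝ x, f s ≤ 1 := by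
    intro s hs
    have h := (abs_le.mp (hspec s hs)).2
    rw [hf]
    have h1 : s + r ≤ 3 * r := by rw [hr]; linarith
    calc c * (s + r) ≤ c * (3 * r) := mul_le_mul_of_nonneg_left h1 hcpos.le
      _ = 1 := hcr
  obtain ⟨w, hwdef⟩ : ∃ w : A, w = cfc f x := ⟨_, rfl⟩
  -- closed form for w
  have hwclosed : w = c • x + (c * r) • (1 : A) := by
    rw [hwdef, hf, cfc_const_mul c (fun s : ℝ => s + r) x (by fun_prop),
      cfc_add x (fun s => s) (fun _ => r) (by fun_prop) (by fun_prop),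
      cfc_id' ℝ x, cfc_const r x, smul_add, Algebra.algebraMap_eq_smul_one, smul_smul]
  -- w is central
  have hwc : ∀ b : A, w * b = b * w := by
    intro b
    rw [hwclosed]
    simp only [add_mul, mul_add, smul_mul_assoc, mul_smul_comm, one_mul, mul_one, hxc b]
  -- square root witnesses
  have hp : star (cfc (fun s => Real.sqrt (f s)) x) * cfc (fun s => Real.sqrt (f s)) x = w := by
    rw [hwdef]; exact aux_sqrt_cfc x hx f hfc hf0
  obtain ⟨g, hg⟩ : ∃ g : ℝ → ℝ, g = fun s => 1 - f s := ⟨_, rfl⟩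
  have hgc : Continuous g := by rw [hg]; exact continuous_const.sub hfc
  have hg0 : ∀ s ∈ spectrum ℝ x, 0 ≤ g s := fun s hs => by
    have := hf1 s hs; rw [hg]; simp only; linarith
  have hq : star (cfc (fun s => Real.sqrt (g s)) x) * cfc (fun s => Real.sqrt (g s)) x
      = 1 - w := by
    rw [aux_sqrt_cfc x hx g hgc hg0, hg,
      cfc_sub (fun _ => (1 : ℝ)) f x (by fun_prop) (hfc.continuousOn), hwdef,
      cfc_const 1 x, map_one]
  -- value of μ at w
  obtain ⟨hxre, hxbound⟩ := aux_mu_real μ hpos hone x hx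
  obtain ⟨ξ, hξ⟩ : ∃ ξ : ℝ, ξ = (μ x).re := ⟨_, rfl⟩
  rw [← hξ] at hxre hxbound
  obtain ⟨t, htdef⟩ : ∃ t : ℝ, t = c * (ξ + r) := ⟨_, rfl⟩
  have hμw : μ w = (t : ℂ) := by
    rw [hwclosed, map_add, LinearMap.map_smul_of_tower, LinearMap.map_smul_of_tower, hone, hxre]
    simp only [Complex.real_smul, htdef]
    push_cast
    ring
  have hbound := abs_le.mp hxbound
  have ht0 : 0 < t := by
    rw [htdef]
    apply mul_pos hcpos
    rw [hr]; linarith [hbound.1]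
  have ht1 : t < 1 := by
    have h1 : ξ + r < 3 * r := by rw [hr]; linarith [hbound.2]
    have h2 := mul_lt_mul_of_pos_left h1 hcpos
    rw [htdef]
    rwa [hcr] at h2
  -- apply the key lemma
  have hkey := aux_key μ hpos hone hpure w _ _ hp hq hwc hμw ht0 ht1 a
  -- extract multiplicativity for x
  have hcne : (c : ℂ) ≠ 0 := by exact_mod_cast hcpos.ne'
  rw [hwclosed, add_mul, smul_mul_assoc, smul_mul_assoc, one_mul, map_add,
    LinearMap.map_smul_of_tower, LinearMap.map_smul_of_tower, map_add,
    LinearMap.map_smul_of_tower, LinearMap.map_smul_of_tower, hone] at hkey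
  simp only [Complex.real_smul] at hkey
  apply mul_left_cancel₀ hcne
  linear_combination hkey

end Aux

/-- For a pure state μ on a unital C*-algebra A and a central C*-subalgebra
Z containing the unit, μ(z a) = μ(z) μ(a) for all z ∈ Z, a ∈ A; in particular μ|_Z is
multiplicative. -/
theorem pure_state_multiplicative_on_central_subalgebra
    {A : Type*} [CStarAlgebra A]
    (Z : StarSubalgebra ℂ A) (hZcentral : (Z : Set A) ⊆ Set.center A)
    (μ : A →ₗ[ℂ] ℂ)
    (hpos : ∀ a : A, 0 ≤ μ (star a * a))
    (hone : μ 1 = 1)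
    (hpure : ∀ (μ₁ μ₂ : A →ₗ[ℂ] ℂ),
      (∀ a : A, 0 ≤ μ₁ (star a * a)) → μ₁ 1 = 1 →
      (∀ a : A, 0 ≤ μ₂ (star a * a)) → μ₂ 1 = 1 →
      ∀ t : ℝ, 0 < t → t < 1 →
        μ = (t : ℂ) • μ₁ + ((1 - t : ℝ) : ℂ) • μ₂ → μ₁ = μ ∧ μ₂ = μ)
    (z : A) (hz : z ∈ Z) (a : A) :
    μ (z * a) = μ z * μ a := by
  -- z is central
  have hzc : ∀ b : A, z * b = b * z := fun b => (hZcentral hz).comm b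
  have hszc : ∀ b : A, star z * b = b * star z := by
    intro b
    have h := congrArg star (hzc (star b))
    rw [star_mul, star_mul, star_star] at h
    exact h.symm
  -- decompose z into selfadjoint real and imaginary parts
  obtain ⟨x, hxdef⟩ : ∃ x : A, x = (2⁻¹ : ℂ) • (z + star z) := ⟨_, rfl⟩
  obtain ⟨y, hydef⟩ : ∃ y : A, y = (-(Complex.I / 2)) • (z - star z) := ⟨_, rfl⟩
  have hxsa : IsSelfAdjoint x := by
    rw [hxdef]
    rw [IsSelfAdjoint, star_smul, star_add, star_star, add_comm]
    congr 1
    simp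
  have hysa : IsSelfAdjoint y := by
    rw [hydef]
    rw [IsSelfAdjoint, star_smul, star_sub, star_star]
    rw [show star (-(Complex.I / 2)) = Complex.I / 2 by simp; ring]
    rw [show (star z - z : A) = (-1 : ℂ) • (z - star z) by rw [neg_one_smul, neg_sub]]
    rw [smul_smul]
    congr 1
    ring
  have hxc : ∀ b : A, x * b = b * x := by
    intro b
    rw [hxdef, smul_mul_assoc, mul_smul_comm, add_mul, mul_add, hzc, hszc]
  have hyc : ∀ b : A, y * b = b * y := by
    intro b
    rw [hydef, smul_mul_assoc, mul_smul_comm, sub_mul, mul_sub, hzc, hszc]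
  have hzxy : z = x + Complex.I • y := by
    rw [hxdef, hydef, smul_smul]
    rw [show Complex.I * -(Complex.I / 2) = 2⁻¹ by
      rw [mul_neg, ← mul_div_assoc, Complex.I_mul_I]
      norm_num]
    rw [smul_add, smul_sub, ← add_sub_assoc]
    rw [show (2⁻¹ : ℂ) • z + (2⁻¹ : ℂ) • star z + (2⁻¹ : ℂ) • z = (2⁻¹ + 2⁻¹ : ℂ) • z
        + (2⁻¹ : ℂ) • star z by rw [add_smul]; abel]
    norm_num
  have hxmul := aux_keySA μ hpos hone hpure x hxsa hxc a
  have hymul := aux_keySA μ hpos hone hpure y hysa hyc a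
  rw [hzxy, add_mul, smul_mul_assoc, map_add, map_smul, map_add, map_smul,
    hxmul, hymul, smul_eq_mul, smul_eq_mul]
  ring
end

section
/- Let G be a group acting on a topological space M by homeomorphisms β_g, let G₀ ⊆ G be a finite subset, and let V ⊆ M be a nonempty open set. Then there exists a nonempty open set Δ ⊆ V such that for each g ∈ G₀, either β_g restricted to Δ is the identity on Δ, or β_g(Δ) ∩ Δ = ∅. -/
lemma step_fixed_or_disjoint
    {M : Type*} [TopologicalSpace M] [T2Space M]
    (f : M ≃ₜ M) (U : Set M) (hU : IsOpen U) (hUne : U.Nonempty) :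
    ∃ W : Set M, IsOpen W ∧ W.Nonempty ∧ W ⊆ U ∧
      ((∀ m ∈ W, f m = m) ∨ (f '' W ∩ W = ∅)) := by
  by_cases h : ∀ m ∈ U, f m = m
  · exact ⟨U, hU, hUne, Set.Subset.rfl, Or.inl h⟩
  · push_neg at h
    obtain ⟨m, hmU, hm⟩ := h
    obtain ⟨A, B, hA, hB, hfA, hmB, hAB⟩ := t2_separation hm
    refine ⟨U ∩ B ∩ f ⁻¹' A, ?_, ⟨m, ⟨hmU, hmB⟩, hfA⟩, fun x hx => hx.1.1, Or.inr ?_⟩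
    · exact ((hU.inter hB).inter (hA.preimage f.continuous))
    · apply Set.eq_empty_of_forall_notMem
      rintro x ⟨⟨y, hy, rfl⟩, hx⟩
      exact hAB.le_bot ⟨hy.2, hx.1.2⟩

/-- For a group acting by homeomorphisms on a (Hausdorff) topological space,
any finite G₀ ⊆ G and nonempty open V contain a nonempty open Δ ⊆ V on which each
g ∈ G₀ either acts as the identity or moves Δ completely off itself. -/
theorem exists_open_subset_fixed_or_disjoint
    {M : Type*} [TopologicalSpace M] [T2Space M]
    {G : Type*} (β : G → M ≃ₜ M)
    (G₀ : Finset G) (V : Set M) (hV : IsOpen V) (hVne : V.Nonempty) :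
    ∃ Δ : Set M, IsOpen Δ ∧ Δ.Nonempty ∧ Δ ⊆ V ∧
      ∀ g ∈ G₀, (∀ m ∈ Δ, β g m = m) ∨ ((β g) '' Δ ∩ Δ = ∅) := by
  classical
  induction G₀ using Finset.induction_on with
  | empty => exact ⟨V, hV, hVne, Set.Subset.rfl, by simp⟩
  | @insert g s hgs ih =>
    obtain ⟨Δ, hΔo, hΔne, hΔV, hΔ⟩ := ih
    obtain ⟨W, hWo, hWne, hWΔ, hW⟩ := step_fixed_or_disjoint (β g) Δ hΔo hΔne
    refine ⟨W, hWo, hWne, hWΔ.trans hΔV, ?_⟩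
    intro g' hg'
    rcases Finset.mem_insert.mp hg' with rfl | hg'
    · exact hW
    · rcases hΔ g' hg' with h | h
      · exact Or.inl fun m hm => h m (hWΔ hm)
      · refine Or.inr (Set.eq_empty_of_forall_notMem fun x hx => ?_)
        have : x ∈ β g' '' Δ ∩ Δ :=
          ⟨Set.image_mono hWΔ hx.1, hWΔ hx.2⟩
        simp [h] at this
end

section
/- Let X, Y be compact Hausdorff spaces, Z a compact Hausdorff space with continuous surjections π_X : Z → X and π_Y : Z → Y. Suppose that for all nonzero f ∈ C(X) and nonzero g ∈ C(Y) the product (f∘π_X)(g∘π_Y) is not identically zero on Z. Then for every nonempty open set V ⊆ X, π_Y(π_X⁻¹(V)) = Y. -/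
/-- For compact Hausdorff spaces X, Y, Z with continuous surjections
π_X : Z → X, π_Y : Z → Y, if nonzero f ∈ C(X), g ∈ C(Y) always have
(f∘π_X)(g∘π_Y) ≢ 0, then π_Y(π_X⁻¹(V)) = Y for every nonempty open V ⊆ X. -/
theorem image_preimage_eq_univ_of_nonzero_products
    {X Y Z : Type*} [TopologicalSpace X] [TopologicalSpace Y] [TopologicalSpace Z]
    [CompactSpace X] [T2Space X] [CompactSpace Y] [T2Space Y]
    [CompactSpace Z] [T2Space Z]
    (πX : C(Z, X)) (πY : C(Z, Y))
    (hπX : Function.Surjective πX) (hπY : Function.Surjective πY)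
    (hprod : ∀ f : C(X, ℂ), f ≠ 0 → ∀ g : C(Y, ℂ), g ≠ 0 →
      ∃ z : Z, f (πX z) * g (πY z) ≠ 0)
    (V : Set X) (hV : IsOpen V) (hVne : V.Nonempty) :
    πY '' (πX ⁻¹' V) = Set.univ := by
  by_contra h
  obtain ⟨y, hy⟩ : ∃ y : Y, y ∉ πY '' (πX ⁻¹' V) := by
    by_contra h'
    push_neg at h'
    exact h (Set.eq_univ_of_forall h')
  obtain ⟨x₀, hx₀⟩ := hVne
  -- shrink: open U with x₀ ∈ U, closure U ⊆ V
  obtain ⟨U, hUopen, hx₀U, hUcl⟩ :=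
    normal_exists_closure_subset (isClosed_singleton (x := x₀)) hV
      (Set.singleton_subset_iff.mpr hx₀)
  -- Urysohn f : 0 on Uᶜ, 1 at x₀
  obtain ⟨f, hf0, hf1, -⟩ :=
    exists_continuous_zero_one_of_isClosed (isClosed_compl_iff.mpr hUopen)
      isClosed_singleton
      (by simpa [Set.disjoint_singleton_right] using hx₀U)
  -- K = πY '' (πX ⁻¹' closure U), compact hence closed, and y ∉ K
  set K : Set Y := πY '' (πX ⁻¹' closure U) with hK
  have hKcompact : IsCompact K :=
    ((isClosed_closure.preimage πX.continuous).isCompact).image πY.continuous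
  have hyK : y ∉ K := fun hmem => hy (by
    obtain ⟨z, hz, hzy⟩ := hmem
    exact ⟨z, hUcl hz, hzy⟩)
  -- Urysohn g : 0 on K, 1 at y
  obtain ⟨g, hg0, hg1, -⟩ :=
    exists_continuous_zero_one_of_isClosed hKcompact.isClosed isClosed_singleton
      (by simpa [Set.disjoint_singleton_right] using hyK)
  -- complexify
  let cR : C(ℝ, ℂ) := ⟨Complex.ofReal, Complex.continuous_ofReal⟩
  have hfne : cR.comp f ≠ 0 := by
    intro hzero
    have : (f x₀ : ℂ) = 0 := congrFun (congrArg DFunLike.coe hzero) x₀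
    rw [hf1 rfl] at this
    simp at this
  have hgne : cR.comp g ≠ 0 := by
    intro hzero
    have : (g y : ℂ) = 0 := congrFun (congrArg DFunLike.coe hzero) y
    rw [hg1 rfl] at this
    simp at this
  obtain ⟨z, hz⟩ := hprod (cR.comp f) hfne (cR.comp g) hgne
  apply hz
  have hfz : f (πX z) ≠ 0 := by
    intro h0
    apply hz
    simp [cR, h0]
  have hXz : πX z ∈ U := by
    by_contra hnot
    exact hfz (hf0 hnot)
  have hgz : g (πY z) = 0 := hg0 ⟨z, subset_closure hXz, rfl⟩
  simp [cR, hgz]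
end
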